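/- If G satisfies the property that any two vanishing elements lying in distinct conjugacy classes have coprime orders, then for any normal subgroup N of G, the quotient G/N also satisfies this property. -/

import Mathlib

open CategoryTheory

/-- An element `g` of a group is a *vanishing element* if some irreducible complex
character vanishes at `g`. -/
def IsVanishing {G : Type} [Group G] (g : G) : Prop :=
  ∃ V : FDRep ℂ G, Simple V ∧ V.character g = 0

namespace Stmt2Aux

variable {G : Type} [Group G]

noncomputable def subrep (V : FDRep ℂ G) (p : Submodule ℂ V)
    (hp : ∀ g : G, ∀ v ∈ p, V.ρ g v ∈ p) : FDRep ℂ G :=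
  FDRep.of
    { toFun := fun g => (V.ρ g).restrict (fun v hv => hp g v hv)
      map_one' := by ext v; simp [LinearMap.restrict_apply]
      map_mul' := by intro g h; ext v; simp [LinearMap.restrict_apply] }

noncomputable def subrepIncl (V : FDRep ℂ G) (p : Submodule ℂ V)
    (hp : ∀ g : G, ∀ v ∈ p, V.ρ g v ∈ p) : subrep V p hp ⟶ V where
  hom := FGModuleCat.ofHom p.subtype
  comm := fun g => by ext v; rfl

instance (V : FDRep ℂ G) (p : Submodule ℂ V) (hp : ∀ g : G, ∀ v ∈ p, V.ρ g v ∈ p) :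
    Mono (subrepIncl V p hp) := by
  apply (Action.forget _ _).mono_of_mono_map
  exact ConcreteCategory.mono_of_injective _ (by exact Subtype.val_injective)

lemma comm_apply {M P : FDRep ℂ G} (f : M ⟶ P) (g : G) (v : M) :
    f.hom (FDRep.ρ M g v) = FDRep.ρ P g (f.hom v) :=
  congrFun (congrArg (fun (h : M.V ⟶ P.V) => (h : M.V → P.V)) (f.comm g)) v

lemma hom_eq_zero_apply {M P : FDRep ℂ G} {f : M ⟶ P} (h : f = 0) (v : M) :
    f.hom v = 0 :=
  congrFun (congrArg (fun (h : M ⟶ P) => (h.hom : M.V → P.V)) h) v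

theorem simple_res (N : Subgroup G) [N.Normal] (V : FDRep ℂ (G ⧸ N)) (hV : Simple V) :
    Simple ((Action.res (FGModuleCat ℂ) (QuotientGroup.mk' N)).obj V) := by
  set W := (Action.res (FGModuleCat ℂ) (QuotientGroup.mk' N)).obj V with hW
  constructor
  intro Y f hf
  constructor
  · intro hiso h0
    rw [h0] at hiso
    have h1 := IsIso.inv_hom_id (0 : Y ⟶ W)
    rw [Limits.comp_zero] at h1
    apply id_nonzero V
    apply Action.Hom.ext
    have h2 : (𝟙 W.V : W.V ⟶ W.V) = 0 := congrArg Action.Hom.hom h1.symm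
    exact h2
  · intro hf0
    have hinj : Function.Injective (f.hom.hom.hom : Y.V →ₗ[ℂ] W.V) := by
      rw [← LinearMap.ker_eq_bot]
      have hq : ∀ g : G, ∀ v ∈ LinearMap.ker (f.hom.hom.hom : Y.V →ₗ[ℂ] W.V),
          FDRep.ρ Y g v ∈ LinearMap.ker (f.hom.hom.hom : Y.V →ₗ[ℂ] W.V) := by
        intro g v hv
        simp only [LinearMap.mem_ker] at hv ⊢
        exact (comm_apply f g v).trans (by rw [show ConcreteCategory.hom f.hom v = 0 from hv, map_zero])
      have hz : subrepIncl Y _ hq ≫ f = 0 ≫ f := by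
        rw [Limits.zero_comp]
        apply Action.Hom.ext
        ext v
        exact v.2
      have h0 := (cancel_mono f).mp hz
      ext v
      simp only [LinearMap.mem_ker, Submodule.mem_bot]
      refine ⟨fun hv => ?_, fun h => by simp [h]⟩
      exact hom_eq_zero_apply h0 (⟨v, hv⟩ : LinearMap.ker (f.hom.hom.hom : Y.V →ₗ[ℂ] W.V))
    have hsurj : Function.Surjective (f.hom.hom.hom : Y.V →ₗ[ℂ] W.V) := by
      have hp : ∀ g : G ⧸ N, ∀ v ∈ LinearMap.range (f.hom.hom.hom : Y.V →ₗ[ℂ] W.V),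
          FDRep.ρ V g v ∈ LinearMap.range (f.hom.hom.hom : Y.V →ₗ[ℂ] W.V) := by
        intro g v hv
        obtain ⟨g, rfl⟩ := QuotientGroup.mk_surjective g
        obtain ⟨y, rfl⟩ := hv
        exact ⟨FDRep.ρ Y g y, by exact comm_apply f g y⟩
      have hne : subrepIncl V _ hp ≠ 0 := by
        intro h0
        apply hf0
        apply Action.Hom.ext
        ext y
        exact hom_eq_zero_apply h0
          (⟨f.hom y, ⟨y, rfl⟩⟩ : LinearMap.range (f.hom.hom.hom : Y.V →ₗ[ℂ] W.V))
      haveI : Mono (subrepIncl V _ hp) := by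
        apply (Action.forget _ _).mono_of_mono_map
        exact ConcreteCategory.mono_of_injective _ (by exact Subtype.val_injective)
      haveI hiso := (Simple.mono_isIso_iff_nonzero (subrepIncl V _ hp)).mpr hne
      haveI : IsIso (subrepIncl V _ hp).hom :=
        Functor.map_isIso (Action.forget (FGModuleCat ℂ) _) (subrepIncl V _ hp)
      intro v
      have hvh := congrFun (congrArg (fun (h : V.V ⟶ V.V) => (h : V.V → V.V))
        (IsIso.inv_hom_id (subrepIncl V _ hp).hom)) v
      obtain ⟨y, hy⟩ := ((inv (subrepIncl V _ hp).hom : V.V ⟶ _) v).2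
      exact ⟨y, hy.trans hvh⟩
    let e := LinearEquiv.ofBijective (f.hom.hom.hom : Y.V →ₗ[ℂ] W.V) ⟨hinj, hsurj⟩
    haveI : IsIso f.hom := by
      refine ⟨⟨FGModuleCat.ofHom (show (W.V : Type) →ₗ[ℂ] Y.V from e.symm.toLinearMap), ?_, ?_⟩⟩
      · ext y
        exact e.symm_apply_apply y
      · ext w
        exact e.apply_symm_apply w
    exact Action.isIso_of_hom_isIso f

end Stmt2Aux

/-- Property (⋆) passes to quotients. -/
theorem stmt2 (G : Type) [Group G] [Fintype G] (N : Subgroup G) [N.Normal]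
    (hG : ∀ x y : G, IsVanishing x → IsVanishing y → ¬ IsConj x y →
      Nat.gcd (orderOf x) (orderOf y) = 1) :
    ∀ x y : G ⧸ N, IsVanishing x → IsVanishing y → ¬ IsConj x y →
      Nat.gcd (orderOf x) (orderOf y) = 1 := by
  intro x y hx hy hxy
  obtain ⟨g, rfl⟩ := QuotientGroup.mk_surjective x
  obtain ⟨h, rfl⟩ := QuotientGroup.mk_surjective y
  have lift : ∀ a : G, IsVanishing ((a : G ⧸ N)) → IsVanishing a := by
    rintro a ⟨V, hV, hchar⟩
    exact ⟨(Action.res (FGModuleCat ℂ) (QuotientGroup.mk' N)).obj V,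
      Stmt2Aux.simple_res N V hV, hchar⟩
  have h1 := hG g h (lift g hx) (lift h hy)
    (fun hc => hxy (by simpa using (QuotientGroup.mk' N).map_isConj hc))
  have d1 : orderOf ((g : G ⧸ N)) ∣ orderOf g := orderOf_map_dvd (QuotientGroup.mk' N) g
  have d2 : orderOf ((h : G ⧸ N)) ∣ orderOf h := orderOf_map_dvd (QuotientGroup.mk' N) h
  exact Nat.Coprime.coprime_dvd_left d1 (Nat.Coprime.coprime_dvd_right d2 h1)
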